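/- Let t ≥ 2 and m ≥ 2 be integers, and let T be a Hamiltonian cycle of the t-subdivided prism G of K_m that contains every vertical edge of G. Then the set of bottom edges of T, i.e. { {a,b} : (u_a^1, u_b^1) ∈ E(T) }, is a perfect matching of K_m. -/

import Mathlib

open SimpleGraph Finset

attribute [local instance] Classical.propDecidable

/-- An edge `e` crosses the vertex set `S` if it has an endpoint in `S`
and an endpoint outside `S`. -/
def crossing {V : Type*} (S : Finset V) (e : Sym2 V) : Prop :=
  (∃ a ∈ e, a ∈ S) ∧ (∃ a ∈ e, a ∉ S)

/-- A comb with handle `H` and teeth `T 0, …, T (k-1)`. -/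
def IsComb {V : Type*} [Fintype V] [DecidableEq V]
    (H : Finset V) {k : ℕ} (T : Fin k → Finset V) : Prop :=
  3 ≤ k ∧ Odd k ∧
  (∀ i j, i ≠ j → Disjoint (T i) (T j)) ∧
  (∀ i, (H ∩ T i).Nonempty) ∧
  (H \ Finset.univ.biUnion T).Nonempty

/-- An `(h,t)`-uniform comb: every tooth has size `t` and meets the handle
in exactly `h` vertices. -/
def IsUniformComb {V : Type*} [Fintype V] [DecidableEq V] (h t : ℕ)
    (H : Finset V) {k : ℕ} (T : Fin k → Finset V) : Prop :=
  IsComb H T ∧ ∀ i, (T i).card = t ∧ (H ∩ T i).card = h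

/-- The `t`-subdivided prism over `K_m`: vertex `(i, j)` is the copy of
vertex `i` in layer `j` (layer `0` is the bottom, layer `t-1` the top).
There are complete graphs on the bottom and top layers, and vertical paths
joining consecutive layers in each column. -/
def subPrism (m t : ℕ) : SimpleGraph (Fin m × Fin t) :=
  SimpleGraph.fromRel (fun p q =>
    (p.2.val = 0 ∧ q.2.val = 0 ∧ p.1 ≠ q.1) ∨
    (p.2.val = t - 1 ∧ q.2.val = t - 1 ∧ p.1 ≠ q.1) ∨
    (p.1 = q.1 ∧ p.2.val + 1 = q.2.val))

/-- A perfect matching of `K_m`, given as a set of (non-loop) edges such that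
every vertex belongs to exactly one of them. -/
def IsPerfectMatchingKm (m : ℕ) (M : Finset (Sym2 (Fin m))) : Prop :=
  (∀ e ∈ M, ¬ e.IsDiag) ∧ ∀ v : Fin m, ∃! e, e ∈ M ∧ v ∈ e

lemma sum_countP_mem {V : Type*} [Fintype V] [DecidableEq V] (l : List (Sym2 V))
    (h : ∀ e ∈ l, ¬ e.IsDiag) :
    ∑ x : V, l.countP (fun e => decide (x ∈ e)) = 2 * l.length := by
  induction l with
  | nil => simp
  | cons e l ih =>
    simp only [List.countP_cons, List.length_cons]
    rw [Finset.sum_add_distrib, ih (fun e' he' => h e' (List.mem_cons_of_mem _ he'))]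
    have h2 : ∑ x : V, (if decide (x ∈ e) = true then 1 else 0) = 2 := by
      induction e with
      | _ a b =>
        have hab : a ≠ b := by simpa using h _ List.mem_cons_self
        have key : ∀ x : V, (if decide (x ∈ s(a,b)) = true then (1:ℕ) else 0)
            = if x = a ∨ x = b then 1 else 0 := by
          intro x; simp [Sym2.mem_iff]
        rw [Finset.sum_congr rfl (fun x _ => key x)]
        rw [← Finset.sum_filter]
        have : Finset.univ.filter (fun x => x = a ∨ x = b) = {a, b} := by
          ext x; simp
        rw [this, Finset.sum_const, Finset.card_insert_of_notMem (by simp [hab]),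
          Finset.card_singleton]
        simp
    omega

theorem bottom_edges_of_tour_form_perfect_matching (t m : ℕ) (ht : 2 ≤ t) (hm : 2 ≤ m)
    (v : Fin m × Fin t) (C : (subPrism m t).Walk v v) (hC : C.IsHamiltonianCycle)
    (hvert : ∀ (i : Fin m) (j : ℕ) (hj : j + 1 < t),
      s(((i, ⟨j, by omega⟩) : Fin m × Fin t), (i, ⟨j + 1, hj⟩)) ∈ C.edges) :
    IsPerfectMatchingKm m
      (Finset.univ.filter (fun e : Sym2 (Fin m) => ∃ a b : Fin m, e = s(a, b) ∧
        s(((a, ⟨0, by omega⟩) : Fin m × Fin t), (b, ⟨0, by omega⟩)) ∈ C.edges)) := by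
  have h0 : (0:ℕ) < t := by omega
  have h1 : (1:ℕ) < t := by omega
  set V := Fin m × Fin t with hV
  -- no edge of the walk is a loop
  have hdiag : ∀ e ∈ C.edges, ¬ e.IsDiag := by
    intro e he
    exact (subPrism m t).not_isDiag_of_mem_edgeSet (C.edges_subset_edgeSet he)
  -- every vertex lies on some edge of the walk (a vertical one)
  have hmem : ∀ x : V, ∃ e ∈ C.edges, x ∈ e := by
    rintro ⟨a, j⟩
    by_cases hj : (j : ℕ) + 1 < t
    · refine ⟨_, hvert a j hj, ?_⟩
      have hx : ((a, j) : V) = (a, ⟨(j:ℕ), by omega⟩) := by simp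
      rw [hx]; exact Sym2.mem_mk_left _ _
    · have hjt : (j:ℕ) = t - 1 := by omega
      have hj2 : (t - 2) + 1 < t := by omega
      refine ⟨_, hvert a (t-2) hj2, ?_⟩
      have hx : ((a, j) : V) = (a, ⟨t-2+1, hj2⟩) := by
        refine Prod.ext rfl (Fin.ext ?_)
        simp [hjt]; omega
      rw [hx]; exact Sym2.mem_mk_right _ _
  -- each vertex lies on exactly two edges of the walk
  have hcount : ∀ x : V, C.edges.countP (fun e => decide (x ∈ e)) = 2 := by
    have heven : ∀ x : V, Even (C.edges.countP (fun e => decide (x ∈ e))) := by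
      intro x
      obtain ⟨n, hn⟩ :=
        (hC.isCycle.isTrail.even_countP_edges_iff x).mpr (fun hne => absurd rfl hne)
      refine ⟨n, ?_⟩
      rw [← hn]
    have hge2 : ∀ x : V, 2 ≤ C.edges.countP (fun e => decide (x ∈ e)) := by
      intro x
      obtain ⟨e, he, hxe⟩ := hmem x
      have hpos : 0 < C.edges.countP (fun e => decide (x ∈ e)) :=
        List.countP_pos_iff.mpr ⟨e, he, by simpa using hxe⟩
      obtain ⟨n, hn⟩ := heven x
      omega
    have hlen : C.edges.length = m * t := by
      rw [C.length_edges, hC.length_eq, Fintype.card_prod, Fintype.card_fin, Fintype.card_fin]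
    have hsum : ∑ x : V, C.edges.countP (fun e => decide (x ∈ e)) = 2 * (m * t) := by
      rw [sum_countP_mem C.edges hdiag, hlen]
    intro x
    by_contra hx
    have hlt : 2 < C.edges.countP (fun e => decide (x ∈ e)) :=
      lt_of_le_of_ne (hge2 x) (Ne.symm hx)
    have h2 := Finset.sum_lt_sum (s := (Finset.univ : Finset V))
      (f := fun _ => 2) (g := fun x => C.edges.countP (fun e => decide (x ∈ e)))
      (fun i _ => hge2 i) ⟨x, Finset.mem_univ x, hlt⟩
    rw [hsum, Finset.sum_const, Finset.card_univ, Fintype.card_prod,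
      Fintype.card_fin, Fintype.card_fin, smul_eq_mul] at h2
    omega
  -- bottom edges are between distinct columns
  have hbot_ne : ∀ a b : Fin m,
      s(((a, ⟨0, h0⟩) : V), (b, ⟨0, h0⟩)) ∈ C.edges → a ≠ b := by
    intro a b hab heq
    subst heq
    exact hdiag _ hab (by simp [Sym2.isDiag_iff_proj_eq])
  -- key claim: for each column a there is a unique b with the bottom edge (a,b)
  have key : ∀ a : Fin m, ∃ b : Fin m,
      s(((a, ⟨0, h0⟩) : V), (b, ⟨0, h0⟩)) ∈ C.edges ∧
      ∀ c : Fin m, s(((a, ⟨0, h0⟩) : V), (c, ⟨0, h0⟩)) ∈ C.edges → c = b := by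
    intro a
    have he₀mem : s(((a, ⟨0, h0⟩) : V), (a, ⟨1, h1⟩)) ∈ C.edges := by
      have h01 : (0:ℕ) + 1 < t := by omega
      have := hvert a 0 h01
      exact this
    set x : V := (a, ⟨0, h0⟩) with hxdef
    set e₀ : Sym2 V := s(x, (a, ⟨1, h1⟩)) with he₀def
    set L : List (Sym2 V) := C.edges.filter (fun e => decide (x ∈ e)) with hLdef
    have hL : L.length = 2 := by
      rw [hLdef, ← List.countP_eq_length_filter]
      exact hcount x
    have hLnodup : L.Nodup := (hC.isCycle.isTrail.edges_nodup).filter _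
    have hLcard : L.toFinset.card = 2 := by
      rw [List.toFinset_card_of_nodup hLnodup, hL]
    have hmemL : ∀ e : Sym2 V, e ∈ C.edges → x ∈ e → e ∈ L.toFinset := by
      intro e he hxe
      exact List.mem_toFinset.mpr (List.mem_filter.mpr ⟨he, by simpa using hxe⟩)
    have he₀L : e₀ ∈ L.toFinset := hmemL e₀ he₀mem (Sym2.mem_mk_left _ _)
    -- any edge of C at x other than e₀ is a bottom edge
    have hclassify : ∀ e ∈ C.edges, x ∈ e → e ≠ e₀ →
        ∃ b : Fin m, a ≠ b ∧ e = s(x, (b, ⟨0, h0⟩)) := by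
      intro e he hxe hene
      obtain ⟨y, rfl⟩ := Sym2.mem_iff_exists.mp hxe
      have hadj : (subPrism m t).Adj x y :=
        (SimpleGraph.mem_edgeSet (subPrism m t)).mp (C.edges_subset_edgeSet he)
      rw [subPrism, SimpleGraph.fromRel_adj] at hadj
      obtain ⟨yb, yj⟩ := y
      rcases hadj.2 with (⟨h1', h2', h3'⟩ | ⟨h1', h2', h3'⟩ | ⟨h1', h2'⟩) |
        (⟨h1', h2', h3'⟩ | ⟨h1', h2', h3'⟩ | ⟨h1', h2'⟩)
      · exact ⟨yb, h3', by rw [show yj = (⟨0, h0⟩ : Fin t) from Fin.ext h2']⟩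
      · exfalso
        have : (0:ℕ) = t - 1 := h1'
        omega
      · exfalso
        apply hene
        rw [he₀def]
        have hyj : yj = (⟨1, h1⟩ : Fin t) := by
          apply Fin.ext
          have : (0:ℕ) + 1 = (yj:ℕ) := h2'
          simpa using this.symm
        rw [hyj, show yb = a from h1'.symm]
      · exact ⟨yb, fun hh => h3' hh.symm, by rw [show yj = (⟨0, h0⟩ : Fin t) from Fin.ext h1']⟩
      · exfalso
        have : (0:ℕ) = t - 1 := h2'
        omega
      · exfalso
        have : (yj:ℕ) + 1 = 0 := h2'
        omega
    -- existence of a bottom edge at x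
    obtain ⟨e₁, he₁L, he₁ne⟩ := Finset.exists_mem_ne (s := L.toFinset) (by omega) e₀
    have he₁mem : e₁ ∈ C.edges := (List.mem_filter.mp (List.mem_toFinset.mp he₁L)).1
    have hxe₁ : x ∈ e₁ := by
      have := (List.mem_filter.mp (List.mem_toFinset.mp he₁L)).2
      simpa using this
    obtain ⟨b, hab, rfl⟩ := hclassify e₁ he₁mem hxe₁ he₁ne
    refine ⟨b, he₁mem, ?_⟩
    -- uniqueness
    intro c hc
    by_contra hcb
    have hne0b : e₀ ≠ s(x, ((b, ⟨0, h0⟩) : V)) := he₁ne.symm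
    have hne0c : e₀ ≠ s(x, ((c, ⟨0, h0⟩) : V)) := by
      intro h
      rw [he₀def, Sym2.eq_iff] at h
      rcases h with ⟨-, h⟩ | ⟨-, h⟩ <;>
        · try simp only [hxdef] at h
          have := congrArg (fun p : V => (p.2 : ℕ)) h
          simp at this
    have hnebc : s(x, ((b, ⟨0, h0⟩) : V)) ≠ s(x, ((c, ⟨0, h0⟩) : V)) := by
      intro h
      rw [Sym2.eq_iff] at h
      rcases h with ⟨-, h⟩ | ⟨h1'', h2''⟩
      · exact hcb (congrArg Prod.fst h).symm
      · have hca : a = c := congrArg Prod.fst h1''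
        have hba : b = a := congrArg Prod.fst h2''
        exact hcb (hca.symm.trans hba.symm)
    have hsub : ({e₀, s(x, ((b, ⟨0, h0⟩) : V)), s(x, ((c, ⟨0, h0⟩) : V))} :
        Finset (Sym2 V)) ⊆ L.toFinset := by
      intro e he
      simp only [Finset.mem_insert, Finset.mem_singleton] at he
      rcases he with rfl | rfl | rfl
      · exact he₀L
      · exact he₁L
      · exact hmemL _ hc (Sym2.mem_mk_left _ _)
    have hcard3 : ({e₀, s(x, ((b, ⟨0, h0⟩) : V)), s(x, ((c, ⟨0, h0⟩) : V))} :
        Finset (Sym2 V)).card = 3 := by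
      rw [Finset.card_insert_of_notMem (by simp [hne0b, hne0c]),
        Finset.card_insert_of_notMem (by simp [hnebc]), Finset.card_singleton]
    have := Finset.card_le_card hsub
    omega
  constructor
  · intro e he
    simp only [Finset.mem_filter] at he
    obtain ⟨-, a, b, rfl, hedge⟩ := he
    have hab := hbot_ne a b hedge
    simp [Sym2.isDiag_iff_proj_eq, hab]
  · intro a
    obtain ⟨b, hb, hbu⟩ := key a
    refine ⟨s(a, b), ⟨?_, Sym2.mem_mk_left _ _⟩, ?_⟩
    · simp only [Finset.mem_filter]
      exact ⟨Finset.mem_univ _, a, b, rfl, hb⟩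
    · rintro e ⟨he, hae⟩
      simp only [Finset.mem_filter] at he
      obtain ⟨-, c, d, rfl, hedge⟩ := he
      rcases Sym2.mem_iff.mp hae with rfl | rfl
      · rw [hbu d hedge]
      · have hswap : s(((a, ⟨0, h0⟩) : V), (c, ⟨0, h0⟩)) ∈ C.edges := by
          rw [Sym2.eq_swap] at hedge
          exact hedge
        rw [hbu c hswap]
        exact Sym2.eq_swap
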